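/- Let y : [0,∞) → [0,∞) be locally integrable and K > 0. Suppose that for almost every s ≥ 0 (and for s = 0) and for every t ≥ s one has y(t) ≤ y(s) − K ∫_s^t y(ξ) dξ. Then y(t) ≤ y(0) e^{−K t} for all t ≥ 0. -/

import Mathlib

open MeasureTheory

/-- Partial sums of the exponential series. -/
noncomputable def gronwallP (n : ℕ) (x : ℝ) : ℝ :=
  ∑ k ∈ Finset.range (n + 1), x ^ k / (Nat.factorial k)

lemma gronwallP_zero (x : ℝ) : gronwallP 0 x = 1 := by
  simp [gronwallP]

lemma gronwallP_tendsto (x : ℝ) :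
    Filter.Tendsto (fun n => gronwallP n x) Filter.atTop (nhds (Real.exp x)) := by
  have h : HasSum (fun n : ℕ => x ^ n / (Nat.factorial n)) (Real.exp x) := by
    rw [Real.exp_eq_exp_ℝ]
    exact NormedSpace.expSeries_div_hasSum_exp x
  have := h.tendsto_sum_nat
  have hshift : Filter.Tendsto (fun n : ℕ => n + 1) Filter.atTop Filter.atTop :=
    Filter.tendsto_add_atTop_nat 1
  exact this.comp hshift

/-- integral of the polynomial part -/
lemma gronwallP_integral (n : ℕ) (K s t : ℝ) (hst : s ≤ t) :
    ∫ ξ in s..t, gronwallP n (K * (t - ξ)) =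
      ∑ k ∈ Finset.range (n + 1), K ^ k * (t - s) ^ (k + 1) / (Nat.factorial (k + 1)) := by
  unfold gronwallP
  rw [intervalIntegral.integral_finset_sum]
  · apply Finset.sum_congr rfl
    intro k _
    have h1 : ∀ ξ : ℝ, (K * (t - ξ)) ^ k / (Nat.factorial k)
        = (K ^ k / (Nat.factorial k)) * (t - ξ) ^ k := by
      intro ξ; rw [mul_pow]; ring
    simp only [h1]
    rw [intervalIntegral.integral_const_mul]
    have h2 : (∫ ξ in s..t, (t - ξ) ^ k) = ∫ x in (t - t)..(t - s), x ^ k :=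
      intervalIntegral.integral_comp_sub_left (fun x => x ^ k) t
    rw [h2, sub_self, integral_pow, Nat.factorial_succ]
    have hz : (0:ℝ) ^ (k + 1) = 0 := zero_pow (Nat.succ_ne_zero k)
    rw [hz, sub_zero]
    push_cast
    rw [div_mul_div_comm, mul_comm ((Nat.factorial k : ℝ)) ((k : ℝ) + 1)]
  · intro k _
    apply Continuous.intervalIntegrable
    fun_prop

/-- The induction step. -/
lemma gronwall_step (y : ℝ → ℝ) (hy_nonneg : ∀ t, 0 ≤ y t)
    (hy_loc : LocallyIntegrableOn y (Set.Ici (0 : ℝ)))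
    (K : ℝ) (hK : 0 < K) (n : ℕ) (s : ℝ) (hs0 : 0 ≤ s)
    (hs : ∀ t, s ≤ t → y t ≤ y s - K * ∫ ξ in s..t, y ξ)
    (ihn : ∀ᵐ ξ ∂(volume.restrict (Set.Ici (0 : ℝ))),
      ∀ t, ξ ≤ t → y t * gronwallP n (K * (t - ξ)) ≤ y ξ) :
    ∀ t, s ≤ t → y t * gronwallP (n + 1) (K * (t - s)) ≤ y s := by
  intro t ht
  have ht0 : (0 : ℝ) ≤ t := le_trans hs0 ht
  -- integrability of y on [s,t]
  have hyint : IntervalIntegrable y volume s t := by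
    have : IntegrableOn y (Set.Icc s t) volume := by
      exact hy_loc.integrableOn_compact_subset
        (fun x hx => le_trans hs0 hx.1) isCompact_Icc
    exact (this.mono_set (by rw [Set.uIcc_of_le ht])).intervalIntegrable
  have hfcont : Continuous (fun ξ => y t * gronwallP n (K * (t - ξ))) := by
    unfold gronwallP; fun_prop
  -- a.e. lower bound on [s,t]
  have hae' : ∀ᵐ ξ ∂(volume.restrict (Set.Icc s t)),
      (fun ξ => y t * gronwallP n (K * (t - ξ))) ξ ≤ y ξ := by
    have hsub : Set.Icc s t ⊆ Set.Ici (0 : ℝ) := fun x hx => le_trans hs0 hx.1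
    have h1 := ae_restrict_of_ae_restrict_of_subset hsub ihn
    have h2 : ∀ᵐ ξ ∂(volume.restrict (Set.Icc s t)), ξ ∈ Set.Icc s t :=
      ae_restrict_mem measurableSet_Icc
    filter_upwards [h1, h2] with ξ hξ hmem
    exact hξ t hmem.2
  have hint : (∫ ξ in s..t, y t * gronwallP n (K * (t - ξ))) ≤ ∫ ξ in s..t, y ξ :=
    intervalIntegral.integral_mono_ae_restrict ht
      (hfcont.intervalIntegrable s t) hyint hae'
  have hval : (∫ ξ in s..t, y t * gronwallP n (K * (t - ξ)))
      = y t * ∑ k ∈ Finset.range (n + 1), K ^ k * (t - s) ^ (k + 1) / (Nat.factorial (k + 1)) := by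
    rw [intervalIntegral.integral_const_mul, gronwallP_integral n K s t ht]
  -- from hs
  have h1 : y t + K * ∫ ξ in s..t, y ξ ≤ y s := by
    have := hs t ht; linarith
  have h2 : y t + K * (y t * ∑ k ∈ Finset.range (n + 1),
      K ^ k * (t - s) ^ (k + 1) / (Nat.factorial (k + 1))) ≤ y s := by
    rw [← hval]
    have := mul_le_mul_of_nonneg_left hint (le_of_lt hK)
    linarith
  -- algebraic identity
  have hid : y t * gronwallP (n + 1) (K * (t - s))
      = y t + K * (y t * ∑ k ∈ Finset.range (n + 1),
        K ^ k * (t - s) ^ (k + 1) / (Nat.factorial (k + 1))) := by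
    unfold gronwallP
    rw [Finset.sum_range_succ']
    simp only [pow_zero, Nat.factorial_zero, Nat.cast_one]
    rw [mul_add, Finset.mul_sum]
    have : ∀ k ∈ Finset.range (n + 1),
        y t * ((K * (t - s)) ^ (k + 1) / (Nat.factorial (k + 1)))
          = K * (y t * (K ^ k * (t - s) ^ (k + 1) / (Nat.factorial (k + 1)))) := by
      intro k _
      rw [mul_pow, pow_succ]
      ring
    rw [Finset.sum_congr rfl this, Finset.mul_sum, Finset.mul_sum]
    ring
  rw [hid]; exact h2

/-- Gronwall-type integral inequality (Proposition A.1): if a nonnegative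
locally integrable function `y` on `[0,∞)` satisfies
`y t ≤ y s - K ∫_s^t y` for a.e. `s ≥ 0` (and for `s = 0`) and all `t ≥ s`,
then `y t ≤ y 0 * exp (-K t)` for all `t ≥ 0`. -/
theorem gronwall_integral_exponential_decay
    (y : ℝ → ℝ) (hy_nonneg : ∀ t, 0 ≤ y t)
    (hy_loc : LocallyIntegrableOn y (Set.Ici (0 : ℝ)))
    (K : ℝ) (hK : 0 < K)
    (hae : ∀ᵐ s ∂(volume.restrict (Set.Ici (0 : ℝ))),
      ∀ t, s ≤ t → y t ≤ y s - K * ∫ ξ in s..t, y ξ)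
    (h0 : ∀ t, (0 : ℝ) ≤ t → y t ≤ y 0 - K * ∫ ξ in (0 : ℝ)..t, y ξ) :
    ∀ t, 0 ≤ t → y t ≤ y 0 * Real.exp (-K * t) := by
  -- key a.e. statement by induction
  have key : ∀ n : ℕ, ∀ᵐ s ∂(volume.restrict (Set.Ici (0 : ℝ))),
      ∀ t, s ≤ t → y t * gronwallP n (K * (t - s)) ≤ y s := by
    intro n
    induction n with
    | zero =>
      filter_upwards [hae, ae_restrict_mem measurableSet_Ici] with s hs hs0 t ht
      rw [gronwallP_zero, mul_one]
      have hint : (0 : ℝ) ≤ ∫ ξ in s..t, y ξ :=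
        intervalIntegral.integral_nonneg ht (fun ξ _ => hy_nonneg ξ)
      have := hs t ht
      nlinarith
    | succ n ih =>
      filter_upwards [hae, ae_restrict_mem measurableSet_Ici] with s hs hs0
      exact gronwall_step y hy_nonneg hy_loc K hK n s hs0 hs ih
  -- pointwise statement at s = 0
  have key0 : ∀ n : ℕ, ∀ t, 0 ≤ t → y t * gronwallP n (K * t) ≤ y 0 := by
    intro n
    induction n with
    | zero =>
      intro t ht
      rw [gronwallP_zero, mul_one]
      have hint : (0 : ℝ) ≤ ∫ ξ in (0:ℝ)..t, y ξ :=
        intervalIntegral.integral_nonneg ht (fun ξ _ => hy_nonneg ξ)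
      have := h0 t ht
      nlinarith
    | succ n _ =>
      intro t ht
      have := gronwall_step y hy_nonneg hy_loc K hK n 0 le_rfl h0 (key n) t ht
      simpa using this
  -- take the limit
  intro t ht
  have hlim : Filter.Tendsto (fun n => y t * gronwallP n (K * t)) Filter.atTop
      (nhds (y t * Real.exp (K * t))) :=
    (gronwallP_tendsto (K * t)).const_mul (y t)
  have hle : y t * Real.exp (K * t) ≤ y 0 :=
    le_of_tendsto hlim (Filter.Eventually.of_forall (fun n => key0 n t ht))
  have hepos : 0 < Real.exp (-K * t) := Real.exp_pos _
  have := mul_le_mul_of_nonneg_right hle (le_of_lt hepos)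
  calc y t = y t * Real.exp (K * t) * Real.exp (-K * t) := by
        rw [mul_assoc, ← Real.exp_add]; ring_nf; simp
    _ ≤ y 0 * Real.exp (-K * t) := this
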